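/- For π ∈ (0,1), μ ∈ ℝ and σ² > 0, let H(π, μ, σ²) denote the hurdle distribution on {0,1} × ℝ given by H(π, μ, σ²) = (1 − π)·(δ_0 ⊗ δ_0) + π·(δ_1 ⊗ N(μ, σ²)), where δ_z is the Dirac point mass and N(μ, σ²) the Gaussian law. Then for all π_0, π_1 ∈ (0,1), μ_0, μ_1 ∈ ℝ and σ_0², σ_1² > 0, the Kullback–Leibler divergence decomposes as KL(H(π_0, μ_0, σ_0²), H(π_1, μ_1, σ_1²)) = KL(Bernoulli(π_0), Bernoulli(π_1)) + π_0 · KL(N(μ_0, σ_0²), N(μ_1, σ_1²)) = π_0 log(π_0/π_1) + (1 − π_0) log((1 − π_0)/(1 − π_1)) + π_0 · [log(σ_1/σ_0) + (σ_0² + (μ_0 − μ_1)²)/(2σ_1²) − 1/2]. -/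

import Mathlib

open MeasureTheory ProbabilityTheory
open scoped ENNReal NNReal

open Classical in
/-- Kullback–Leibler divergence `KL(P,Q) = ∫ log(dP/dQ) dP` if `P ≪ Q`, and `+∞` otherwise. -/
noncomputable def klDiv' {X : Type*} [MeasurableSpace X] (P Q : Measure X) : ℝ≥0∞ :=
  if P ≪ Q then ENNReal.ofReal (∫ x, Real.log ((P.rnDeriv Q x).toReal) ∂P) else ⊤

/-- The Bernoulli distribution on `{0,1}` (modelled as `Bool`) with success probability `π`. -/
noncomputable def bernoulliMeasure (π : ℝ) : Measure Bool :=
  ENNReal.ofReal (1 - π) • Measure.dirac false + ENNReal.ofReal π • Measure.dirac true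

/-- The hurdle distribution on `{0,1} × ℝ`:
`H(π, μ, σ²) = (1 − π)·(δ₀ ⊗ δ₀) + π·(δ₁ ⊗ N(μ, σ²))`. -/
noncomputable def hurdleMeasure (π μv σsq : ℝ) : Measure (Bool × ℝ) :=
  ENNReal.ofReal (1 - π) • Measure.dirac (false, (0 : ℝ)) +
    ENNReal.ofReal π • (Measure.dirac true).prod (gaussianReal μv σsq.toNNReal)

open Real Filter
open scoped Topology



lemma tendsto_mul_exp_neg_mul_sq_atTop {b : ℝ} (hb : 0 < b) :
    Tendsto (fun x : ℝ => x * Real.exp (-b * x ^ 2)) atTop (𝓝 0) := by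
  have h1 : Tendsto (fun y : ℝ => y ^ 1 * Real.exp (-y)) atTop (𝓝 0) :=
    tendsto_pow_mul_exp_neg_atTop_nhds_zero 1
  have h2 : Tendsto (fun x : ℝ => b * x ^ 2) atTop atTop :=
    (tendsto_pow_atTop (by norm_num)).const_mul_atTop hb
  have h3 : Tendsto (fun x : ℝ => (b * x ^ 2) ^ 1 * Real.exp (-(b * x ^ 2))) atTop (𝓝 0) :=
    h1.comp h2
  have h4 : Tendsto (fun x : ℝ => (b * x)⁻¹ * ((b * x ^ 2) ^ 1 * Real.exp (-(b * x ^ 2))))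
      atTop (𝓝 0) := by
    simpa using (((tendsto_const_mul_atTop_of_pos hb).mpr tendsto_id).inv_tendsto_atTop).mul h3
  refine h4.congr' ?_
  filter_upwards [eventually_gt_atTop 0] with x hx
  field_simp

lemma tendsto_mul_exp_neg_mul_sq_atBot {b : ℝ} (hb : 0 < b) :
    Tendsto (fun x : ℝ => x * Real.exp (-b * x ^ 2)) atBot (𝓝 0) := by
  have := (tendsto_mul_exp_neg_mul_sq_atTop hb).comp tendsto_neg_atBot_atTop
  have h : Tendsto (fun x : ℝ => -(x * Real.exp (-b * x ^ 2))) atBot (𝓝 0) := by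
    simpa [Function.comp_def, neg_mul, neg_sq] using this
  simpa using h.neg

lemma tendsto_exp_neg_mul_sq_atTop {b : ℝ} (hb : 0 < b) :
    Tendsto (fun x : ℝ => Real.exp (-b * x ^ 2)) atTop (𝓝 0) := by
  have h2 : Tendsto (fun x : ℝ => b * x ^ 2) atTop atTop :=
    (tendsto_pow_atTop (by norm_num)).const_mul_atTop hb
  have h3 : Tendsto (fun x : ℝ => -(b * x ^ 2)) atTop atBot := by
    exact tendsto_neg_atBot_iff.mpr h2
  have := Real.tendsto_exp_atBot.comp h3
  simpa [Function.comp_def] using this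

lemma tendsto_exp_neg_mul_sq_atBot {b : ℝ} (hb : 0 < b) :
    Tendsto (fun x : ℝ => Real.exp (-b * x ^ 2)) atBot (𝓝 0) := by
  have := (tendsto_exp_neg_mul_sq_atTop hb).comp tendsto_neg_atBot_atTop
  simpa [Function.comp_def, neg_sq] using this

lemma integral_mul_exp_neg_mul_sq' {b : ℝ} (hb : 0 < b) :
    ∫ x : ℝ, x * Real.exp (-b * x ^ 2) = 0 := by
  have hderiv : ∀ x : ℝ, HasDerivAt (fun x : ℝ => -(2 * b)⁻¹ * Real.exp (-b * x ^ 2))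
      (x * Real.exp (-b * x ^ 2)) x := by
    intro x
    have h1 : HasDerivAt (fun x : ℝ => -b * x ^ 2) (-b * (2 * x)) x := by
      simpa using ((hasDerivAt_pow 2 x).const_mul (-b))
    have := (h1.exp).const_mul (-(2 * b)⁻¹)
    refine this.congr_deriv ?_
    field_simp
  have := integral_of_hasDerivAt_of_tendsto hderiv (integrable_mul_exp_neg_mul_sq hb)
    ((tendsto_exp_neg_mul_sq_atBot hb).const_mul _) ((tendsto_exp_neg_mul_sq_atTop hb).const_mul _)
  simpa using this

lemma integrable_sq_mul_exp_neg_mul_sq {b : ℝ} (hb : 0 < b) :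
    Integrable (fun x : ℝ => x ^ 2 * Real.exp (-b * x ^ 2)) := by
  simpa [Real.rpow_natCast] using integrable_rpow_mul_exp_neg_mul_sq hb (by norm_num : (-1:ℝ) < 2)

lemma integral_sq_mul_exp_neg_mul_sq {b : ℝ} (hb : 0 < b) :
    ∫ x : ℝ, x ^ 2 * Real.exp (-b * x ^ 2) = Real.sqrt (π / b) / (2 * b) := by
  have hderiv : ∀ x : ℝ, HasDerivAt (fun x : ℝ => -(2 * b)⁻¹ * (x * Real.exp (-b * x ^ 2)))
      (x ^ 2 * Real.exp (-b * x ^ 2) - (2 * b)⁻¹ * Real.exp (-b * x ^ 2)) x := by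
    intro x
    have h1 : HasDerivAt (fun x : ℝ => -b * x ^ 2) (-b * (2 * x)) x := by
      simpa using ((hasDerivAt_pow 2 x).const_mul (-b))
    have h2 : HasDerivAt (fun x : ℝ => x * Real.exp (-b * x ^ 2))
        (1 * Real.exp (-b * x ^ 2) + x * (Real.exp (-b * x ^ 2) * (-b * (2 * x)))) x :=
      (hasDerivAt_id x).mul h1.exp
    have := h2.const_mul (-(2 * b)⁻¹)
    refine this.congr_deriv ?_
    field_simp
    ring
  have hint : Integrable (fun x : ℝ => x ^ 2 * Real.exp (-b * x ^ 2)
      - (2 * b)⁻¹ * Real.exp (-b * x ^ 2)) :=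
    (integrable_sq_mul_exp_neg_mul_sq hb).sub ((integrable_exp_neg_mul_sq hb).const_mul _)
  have hzero := integral_of_hasDerivAt_of_tendsto hderiv hint
    ((tendsto_mul_exp_neg_mul_sq_atBot hb).const_mul _)
    ((tendsto_mul_exp_neg_mul_sq_atTop hb).const_mul _)
  rw [sub_self, integral_sub (integrable_sq_mul_exp_neg_mul_sq hb)
    ((integrable_exp_neg_mul_sq hb).const_mul _), sub_eq_zero] at hzero
  rw [hzero, integral_const_mul, integral_gaussian]
  field_simp


lemma integrable_pow_mul_exp_neg_mul_sq' {b : ℝ} (hb : 0 < b) (k : ℕ) :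
    Integrable (fun y : ℝ => y ^ k * Real.exp (-b * y ^ 2)) := by
  have hk : (-1:ℝ) < k := by
    have := Nat.cast_nonneg (α := ℝ) k; linarith
  have := integrable_rpow_mul_exp_neg_mul_sq hb (s := k) hk
  simpa [Real.rpow_natCast] using this

lemma gaussianPDFReal_eq (μ : ℝ) (v : ℝ≥0) (x : ℝ) :
    gaussianPDFReal μ v x
      = (√(2 * π * v))⁻¹ * Real.exp (-(2 * (v:ℝ))⁻¹ * (x - μ) ^ 2) := by
  rw [gaussianPDFReal]
  congr 1
  rw [neg_div, div_eq_mul_inv, mul_comm]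
  ring_nf

lemma integrable_pow_sub_gaussianReal {μ : ℝ} {v : ℝ≥0} (hv : v ≠ 0) (k : ℕ) :
    Integrable (fun x => (x - μ) ^ k) (gaussianReal μ v) := by
  have hv' : (0:ℝ) < v := by positivity
  have hb : (0:ℝ) < (2 * (v:ℝ))⁻¹ := by positivity
  rw [gaussianReal_of_var_ne_zero _ hv,
    show (gaussianPDF μ v) = fun x => ((gaussianPDFReal μ v x).toNNReal : ℝ≥0∞) from rfl,
    integrable_withDensity_iff_integrable_smul ((measurable_gaussianPDFReal μ v).real_toNNReal)]
  have base := ((integrable_pow_mul_exp_neg_mul_sq' hb k).const_mul (√(2 * π * v))⁻¹)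
  have h2 := base.comp_sub_right μ
  refine h2.congr (Filter.Eventually.of_forall fun x => ?_)
  simp only [NNReal.smul_def, smul_eq_mul]
  rw [Real.coe_toNNReal _ (gaussianPDFReal_nonneg μ v x), gaussianPDFReal_eq]
  ring

lemma integral_pow_sub_gaussianReal {μ : ℝ} {v : ℝ≥0} (hv : v ≠ 0) (k : ℕ) :
    ∫ x, (x - μ) ^ k ∂(gaussianReal μ v)
      = (√(2 * π * v))⁻¹ * ∫ y, y ^ k * Real.exp (-(2 * (v:ℝ))⁻¹ * y ^ 2) := by
  rw [gaussianReal_of_var_ne_zero _ hv,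
    show (gaussianPDF μ v) = fun x => ((gaussianPDFReal μ v x).toNNReal : ℝ≥0∞) from rfl,
    integral_withDensity_eq_integral_smul ((measurable_gaussianPDFReal μ v).real_toNNReal)]
  rw [← integral_const_mul, ← integral_sub_right_eq_self (μ := volume)
    (fun y => (√(2 * π * v))⁻¹ * (y ^ k * Real.exp (-(2 * (v:ℝ))⁻¹ * y ^ 2))) μ]
  refine integral_congr_ae (Filter.Eventually.of_forall fun x => ?_)
  simp only [NNReal.smul_def, smul_eq_mul]
  rw [Real.coe_toNNReal _ (gaussianPDFReal_nonneg μ v x), gaussianPDFReal_eq]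
  ring

lemma integral_sub_gaussianReal {μ : ℝ} {v : ℝ≥0} (hv : v ≠ 0) :
    ∫ x, (x - μ) ∂(gaussianReal μ v) = 0 := by
  have hb : (0:ℝ) < (2 * (v:ℝ))⁻¹ := by
    have : (0:ℝ) < v := by positivity
    positivity
  have h := integral_pow_sub_gaussianReal (μ := μ) hv 1
  simp only [pow_one] at h
  rw [h, integral_mul_exp_neg_mul_sq' hb, mul_zero]

lemma integral_sub_sq_gaussianReal {μ : ℝ} {v : ℝ≥0} (hv : v ≠ 0) :
    ∫ x, (x - μ) ^ 2 ∂(gaussianReal μ v) = v := by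
  have hv' : (0:ℝ) < v := by positivity
  have hb : (0:ℝ) < (2 * (v:ℝ))⁻¹ := by positivity
  have h := integral_pow_sub_gaussianReal (μ := μ) hv 2
  rw [integral_sq_mul_exp_neg_mul_sq hb] at h
  rw [h, show π / (2 * (v:ℝ))⁻¹ = 2 * π * v by field_simp]
  have hA : (0:ℝ) < 2 * π * v := by positivity
  have hs : √(2 * π * v) ≠ 0 := ne_of_gt (Real.sqrt_pos.mpr hA)
  field_simp


section gaussKL
variable {μ₀ μ₁ σ₀ σ₁ : ℝ}

lemma coe_toNNReal_sq (σ : ℝ) : (((σ ^ 2).toNNReal : ℝ≥0) : ℝ) = σ ^ 2 :=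
  Real.coe_toNNReal _ (sq_nonneg σ)

lemma toNNReal_sq_ne_zero (hσ : 0 < σ₀) : (σ₀ ^ 2).toNNReal ≠ 0 := by
  simp only [ne_eq, Real.toNNReal_eq_zero, not_le]
  positivity

/-- Pointwise formula for the Gaussian log-density ratio. -/
lemma log_ratio_eq (hσ₀ : 0 < σ₀) (hσ₁ : 0 < σ₁) (x : ℝ) :
    Real.log (gaussianPDFReal μ₀ (σ₀ ^ 2).toNNReal x)
        - Real.log (gaussianPDFReal μ₁ (σ₁ ^ 2).toNNReal x)
      = Real.log (σ₁ / σ₀) + (μ₀ - μ₁) ^ 2 / (2 * σ₁ ^ 2)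
          + (1 / (2 * σ₁ ^ 2) - 1 / (2 * σ₀ ^ 2)) * (x - μ₀) ^ 2
          + ((μ₀ - μ₁) / σ₁ ^ 2) * (x - μ₀) := by
  have h2π : (0:ℝ) < 2 * π := by positivity
  have e0 : (0:ℝ) < 2 * π * σ₀ ^ 2 := by positivity
  have e1 : (0:ℝ) < 2 * π * σ₁ ^ 2 := by positivity
  rw [gaussianPDFReal, gaussianPDFReal, coe_toNNReal_sq, coe_toNNReal_sq,
    Real.log_mul (by positivity) (Real.exp_pos _).ne',
    Real.log_mul (by positivity) (Real.exp_pos _).ne',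
    Real.log_exp, Real.log_exp, Real.log_inv, Real.log_inv,
    Real.log_sqrt e0.le, Real.log_sqrt e1.le,
    Real.log_mul h2π.ne' (by positivity), Real.log_mul h2π.ne' (by positivity),
    Real.log_pow, Real.log_pow, Real.log_div hσ₁.ne' hσ₀.ne']
  field_simp
  ring

/-- Integrability of the Gaussian log-density ratio. -/
lemma integrable_log_ratio (hσ₀ : 0 < σ₀) (hσ₁ : 0 < σ₁) :
    Integrable (fun x => Real.log (gaussianPDFReal μ₀ (σ₀ ^ 2).toNNReal x)
        - Real.log (gaussianPDFReal μ₁ (σ₁ ^ 2).toNNReal x))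
      (gaussianReal μ₀ (σ₀ ^ 2).toNNReal) := by
  have hv₀ := toNNReal_sq_ne_zero hσ₀
  have I2 := (integrable_pow_sub_gaussianReal (μ := μ₀) hv₀ 2).const_mul
    (1 / (2 * σ₁ ^ 2) - 1 / (2 * σ₀ ^ 2))
  have I1 := (integrable_pow_sub_gaussianReal (μ := μ₀) hv₀ 1).const_mul ((μ₀ - μ₁) / σ₁ ^ 2)
  have : Integrable (fun x => (Real.log (σ₁ / σ₀) + (μ₀ - μ₁) ^ 2 / (2 * σ₁ ^ 2))
      + ((1 / (2 * σ₁ ^ 2) - 1 / (2 * σ₀ ^ 2)) * (x - μ₀) ^ 2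
        + ((μ₀ - μ₁) / σ₁ ^ 2) * (x - μ₀) ^ 1)) (gaussianReal μ₀ (σ₀ ^ 2).toNNReal) :=
    (integrable_const _).add (I2.add I1)
  refine this.congr (Filter.Eventually.of_forall fun x => ?_)
  simp only [log_ratio_eq hσ₀ hσ₁ x, pow_one]
  ring

/-- The Gaussian KL integral. -/
lemma integral_log_ratio (hσ₀ : 0 < σ₀) (hσ₁ : 0 < σ₁) :
    ∫ x, (Real.log (gaussianPDFReal μ₀ (σ₀ ^ 2).toNNReal x)
        - Real.log (gaussianPDFReal μ₁ (σ₁ ^ 2).toNNReal x))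
      ∂(gaussianReal μ₀ (σ₀ ^ 2).toNNReal)
      = Real.log (σ₁ / σ₀) + (σ₀ ^ 2 + (μ₀ - μ₁) ^ 2) / (2 * σ₁ ^ 2) - 1 / 2 := by
  have hv₀ := toNNReal_sq_ne_zero hσ₀
  have I2 := (integrable_pow_sub_gaussianReal (μ := μ₀) hv₀ 2).const_mul
    (1 / (2 * σ₁ ^ 2) - 1 / (2 * σ₀ ^ 2))
  have I1 := (integrable_pow_sub_gaussianReal (μ := μ₀) hv₀ 1).const_mul ((μ₀ - μ₁) / σ₁ ^ 2)
  have hrw : ∀ x : ℝ, Real.log (gaussianPDFReal μ₀ (σ₀ ^ 2).toNNReal x)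
        - Real.log (gaussianPDFReal μ₁ (σ₁ ^ 2).toNNReal x)
      = (Real.log (σ₁ / σ₀) + (μ₀ - μ₁) ^ 2 / (2 * σ₁ ^ 2))
          + ((1 / (2 * σ₁ ^ 2) - 1 / (2 * σ₀ ^ 2)) * (x - μ₀) ^ 2
            + ((μ₀ - μ₁) / σ₁ ^ 2) * (x - μ₀) ^ 1) := by
    intro x; rw [log_ratio_eq hσ₀ hσ₁]; ring
  have I12 : Integrable (fun x => (1 / (2 * σ₁ ^ 2) - 1 / (2 * σ₀ ^ 2)) * (x - μ₀) ^ 2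
      + ((μ₀ - μ₁) / σ₁ ^ 2) * (x - μ₀) ^ 1) (gaussianReal μ₀ (σ₀ ^ 2).toNNReal) := I2.add I1
  rw [integral_congr_ae (Filter.Eventually.of_forall hrw), integral_add
    (integrable_const _) I12, integral_add I2 I1, integral_const_mul, integral_const_mul]
  have m1 : ∫ x, (x - μ₀) ^ 1 ∂(gaussianReal μ₀ (σ₀ ^ 2).toNNReal) = 0 := by
    have := integral_sub_gaussianReal (μ := μ₀) hv₀
    simpa using this
  have m2 : ∫ x, (x - μ₀) ^ 2 ∂(gaussianReal μ₀ (σ₀ ^ 2).toNNReal) = σ₀ ^ 2 := by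
    rw [integral_sub_sq_gaussianReal hv₀, coe_toNNReal_sq]
  rw [m1, m2, integral_const]
  simp only [measure_univ, probReal_univ, ENNReal.toReal_one, smul_eq_mul, one_mul, mul_zero, add_zero]
  field_simp
  ring
end gaussKL


lemma withDensity_dirac' {α : Type*} [MeasurableSpace α] {f : α → ℝ≥0∞} (hf : Measurable f)
    (a : α) : (Measure.dirac a).withDensity f = f a • Measure.dirac a := by
  classical
  ext s hs
  rw [withDensity_apply _ hs, setLIntegral_dirac' hf hs, Measure.smul_apply,
    Measure.dirac_apply' _ hs, smul_eq_mul]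
  by_cases h : a ∈ s <;> simp [h]

lemma withDensity_map' {α β : Type*} [MeasurableSpace α] [MeasurableSpace β] {f : α → β}
    (hf : Measurable f) {g : β → ℝ≥0∞} (hg : Measurable g) (μ : Measure α) :
    (μ.map f).withDensity g = (μ.withDensity (fun x => g (f x))).map f := by
  ext s hs
  rw [withDensity_apply _ hs, Measure.map_apply hf hs, setLIntegral_map hs hg hf,
    withDensity_apply _ (hf hs)]

lemma gaussian_withDensity_ratio {μ₀ μ₁ σ₀ σ₁ : ℝ} (hσ₀ : 0 < σ₀) (hσ₁ : 0 < σ₁) :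
    (gaussianReal μ₁ (σ₁ ^ 2).toNNReal).withDensity
        (fun x => ENNReal.ofReal (gaussianPDFReal μ₀ (σ₀ ^ 2).toNNReal x
          / gaussianPDFReal μ₁ (σ₁ ^ 2).toNNReal x))
      = gaussianReal μ₀ (σ₀ ^ 2).toNNReal := by
  have hv₀ := toNNReal_sq_ne_zero hσ₀
  have hv₁ := toNNReal_sq_ne_zero hσ₁
  rw [gaussianReal_of_var_ne_zero _ hv₁, gaussianReal_of_var_ne_zero _ hv₀,
    ← withDensity_mul _ (measurable_gaussianPDF _ _)
      (show Measurable (fun x => ENNReal.ofReal (gaussianPDFReal μ₀ (σ₀ ^ 2).toNNReal x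
        / gaussianPDFReal μ₁ (σ₁ ^ 2).toNNReal x)) from
      (((measurable_gaussianPDFReal _ _).div (measurable_gaussianPDFReal _ _)).ennreal_ofReal))]
  congr 1
  ext x
  simp only [Pi.mul_apply, gaussianPDF]
  rw [← ENNReal.ofReal_mul (gaussianPDFReal_nonneg _ _ x),
    mul_div_cancel₀ _ (gaussianPDFReal_pos _ _ x hv₁).ne']
lemma isFiniteMeasure_ofReal_smul {α : Type*} [MeasurableSpace α] (c : ℝ) (μ : Measure α)
    [IsFiniteMeasure μ] : IsFiniteMeasure (ENNReal.ofReal c • μ) := by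
  constructor
  rw [Measure.smul_apply, smul_eq_mul]
  exact ENNReal.mul_lt_top ENNReal.ofReal_lt_top (measure_lt_top μ _)

lemma integrable_dirac'' {α : Type*} [MeasurableSpace α] {f : α → ℝ} (hf : Measurable f)
    (a : α) : Integrable f (Measure.dirac a) := by
  refine ⟨hf.aestronglyMeasurable, ?_⟩
  rw [HasFiniteIntegral, lintegral_dirac' a hf.enorm]
  exact enorm_lt_top

section gaussKLdiv
variable {μ₀ μ₁ σ₀ σ₁ : ℝ}

lemma measurable_gauss_ratio (μ₀ μ₁ : ℝ) (v₀ v₁ : ℝ≥0) :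
    Measurable (fun x => ENNReal.ofReal (gaussianPDFReal μ₀ v₀ x / gaussianPDFReal μ₁ v₁ x)) :=
  ((measurable_gaussianPDFReal _ _).div (measurable_gaussianPDFReal _ _)).ennreal_ofReal

lemma gaussian_ac (hσ₀ : 0 < σ₀) (hσ₁ : 0 < σ₁) :
    gaussianReal μ₀ (σ₀ ^ 2).toNNReal ≪ gaussianReal μ₁ (σ₁ ^ 2).toNNReal := by
  rw [← gaussian_withDensity_ratio hσ₀ hσ₁]
  exact withDensity_absolutelyContinuous _ _

lemma gaussian_rnDeriv_ae (hσ₀ : 0 < σ₀) (hσ₁ : 0 < σ₁) :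
    (gaussianReal μ₀ (σ₀ ^ 2).toNNReal).rnDeriv (gaussianReal μ₁ (σ₁ ^ 2).toNNReal)
      =ᵐ[gaussianReal μ₁ (σ₁ ^ 2).toNNReal]
      fun x => ENNReal.ofReal (gaussianPDFReal μ₀ (σ₀ ^ 2).toNNReal x
        / gaussianPDFReal μ₁ (σ₁ ^ 2).toNNReal x) := by
  have := Measure.rnDeriv_withDensity (gaussianReal μ₁ (σ₁ ^ 2).toNNReal)
    (measurable_gauss_ratio μ₀ μ₁ (σ₀ ^ 2).toNNReal (σ₁ ^ 2).toNNReal)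
  rwa [gaussian_withDensity_ratio hσ₀ hσ₁] at this

lemma gaussian_log_rnDeriv_ae (hσ₀ : 0 < σ₀) (hσ₁ : 0 < σ₁) :
    (fun x => Real.log (((gaussianReal μ₀ (σ₀ ^ 2).toNNReal).rnDeriv
        (gaussianReal μ₁ (σ₁ ^ 2).toNNReal) x).toReal))
      =ᵐ[gaussianReal μ₀ (σ₀ ^ 2).toNNReal]
      fun x => Real.log (gaussianPDFReal μ₀ (σ₀ ^ 2).toNNReal x)
        - Real.log (gaussianPDFReal μ₁ (σ₁ ^ 2).toNNReal x) := by
  have h := (gaussian_rnDeriv_ae (μ₀ := μ₀) (μ₁ := μ₁) hσ₀ hσ₁).filter_mono (gaussian_ac (μ₀ := μ₀) (μ₁ := μ₁) hσ₀ hσ₁).ae_le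
  filter_upwards [h] with x hx
  rw [hx, ENNReal.toReal_ofReal (div_nonneg (gaussianPDFReal_nonneg _ _ x) (gaussianPDFReal_nonneg _ _ x)),
    Real.log_div (gaussianPDFReal_pos _ _ x (toNNReal_sq_ne_zero hσ₀)).ne'
      (gaussianPDFReal_pos _ _ x (toNNReal_sq_ne_zero hσ₁)).ne']

lemma klDiv'_gaussian (hσ₀ : 0 < σ₀) (hσ₁ : 0 < σ₁) :
    klDiv' (gaussianReal μ₀ (σ₀ ^ 2).toNNReal) (gaussianReal μ₁ (σ₁ ^ 2).toNNReal)
      = ENNReal.ofReal (Real.log (σ₁ / σ₀)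
          + (σ₀ ^ 2 + (μ₀ - μ₁) ^ 2) / (2 * σ₁ ^ 2) - 1 / 2) := by
  rw [klDiv', if_pos (gaussian_ac hσ₀ hσ₁),
    integral_congr_ae (gaussian_log_rnDeriv_ae hσ₀ hσ₁), integral_log_ratio hσ₀ hσ₁]
end gaussKLdiv
section bern
variable {q₀ q₁ : ℝ}

noncomputable def bernDensity (q₀ q₁ : ℝ) : Bool → ℝ≥0∞ := fun b =>
  if b then ENNReal.ofReal (q₀ / q₁) else ENNReal.ofReal ((1 - q₀) / (1 - q₁))

lemma measurable_bernDensity (q₀ q₁ : ℝ) : Measurable (bernDensity q₀ q₁) :=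
  measurable_of_countable _

lemma bernoulli_withDensity (hq₀ : q₀ ∈ Set.Ioo (0:ℝ) 1) (hq₁ : q₁ ∈ Set.Ioo (0:ℝ) 1) :
    (_root_.bernoulliMeasure q₁).withDensity (bernDensity q₀ q₁) = _root_.bernoulliMeasure q₀ := by
  rw [_root_.bernoulliMeasure, _root_.bernoulliMeasure, withDensity_add_measure,
    withDensity_smul_measure, withDensity_smul_measure,
    withDensity_dirac' (measurable_bernDensity q₀ q₁) false,
    withDensity_dirac' (measurable_bernDensity q₀ q₁) true]
  have h1 : (1:ℝ) - q₁ ≠ 0 := by have := hq₁.2; intro h; linarith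
  have h2 : q₁ ≠ 0 := hq₁.1.ne'
  simp only [bernDensity, if_true, if_false, Bool.false_eq_true, smul_smul]
  rw [← ENNReal.ofReal_mul (by have := hq₁.2; linarith),
    ← ENNReal.ofReal_mul (le_of_lt hq₁.1),
    mul_div_cancel₀ _ h1, mul_div_cancel₀ _ h2]

lemma klDiv'_bernoulli (hq₀ : q₀ ∈ Set.Ioo (0:ℝ) 1) (hq₁ : q₁ ∈ Set.Ioo (0:ℝ) 1) :
    klDiv' (_root_.bernoulliMeasure q₀) (_root_.bernoulliMeasure q₁)
      = ENNReal.ofReal ((1 - q₀) * Real.log ((1 - q₀) / (1 - q₁))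
          + q₀ * Real.log (q₀ / q₁)) := by
  have hac : _root_.bernoulliMeasure q₀ ≪ _root_.bernoulliMeasure q₁ := by
    rw [← bernoulli_withDensity hq₀ hq₁]; exact withDensity_absolutelyContinuous _ _
  haveI : IsFiniteMeasure (_root_.bernoulliMeasure q₁) := by
    rw [_root_.bernoulliMeasure]
    haveI := isFiniteMeasure_ofReal_smul (1 - q₁) (Measure.dirac false)
    haveI := isFiniteMeasure_ofReal_smul q₁ (Measure.dirac true)
    infer_instance
  have hrn : (_root_.bernoulliMeasure q₀).rnDeriv (_root_.bernoulliMeasure q₁)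
      =ᵐ[_root_.bernoulliMeasure q₁] bernDensity q₀ q₁ := by
    have := Measure.rnDeriv_withDensity (_root_.bernoulliMeasure q₁) (measurable_bernDensity q₀ q₁)
    rwa [bernoulli_withDensity hq₀ hq₁] at this
  have hrn' := hrn.filter_mono hac.ae_le
  rw [klDiv', if_pos hac]
  have hint : ∫ b, Real.log (((_root_.bernoulliMeasure q₀).rnDeriv (_root_.bernoulliMeasure q₁) b).toReal)
        ∂(_root_.bernoulliMeasure q₀)
      = ∫ b, Real.log ((bernDensity q₀ q₁ b).toReal) ∂(_root_.bernoulliMeasure q₀) := by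
    refine integral_congr_ae ?_
    filter_upwards [hrn'] with b hb
    rw [hb]
  have hmeas : Measurable fun b => Real.log ((bernDensity q₀ q₁ b).toReal) :=
    measurable_of_countable _
  rw [hint, _root_.bernoulliMeasure, integral_add_measure
    ((integrable_dirac'' hmeas false).smul_measure ENNReal.ofReal_ne_top)
    ((integrable_dirac'' hmeas true).smul_measure ENNReal.ofReal_ne_top),
    integral_smul_measure, integral_smul_measure, integral_dirac, integral_dirac]
  simp only [bernDensity, if_true, if_false, Bool.false_eq_true]
  have ha := hq₀.1; have hb := hq₀.2; have hc := hq₁.1; have hd := hq₁.2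
  rw [ENNReal.toReal_ofReal (div_nonneg (by linarith) (by linarith) : (0:ℝ) ≤ (1 - q₀) / (1 - q₁)),
    ENNReal.toReal_ofReal (div_nonneg (by linarith) (by linarith) : (0:ℝ) ≤ q₀ / q₁),
    ENNReal.toReal_ofReal (by linarith : (0:ℝ) ≤ 1 - q₀),
    ENNReal.toReal_ofReal hq₀.1.le]
  simp [smul_eq_mul]
end bern
section hurdle
variable {q₀ q₁ μ₀ μ₁ σ₀ σ₁ : ℝ}

noncomputable def hurdleDensity (q₀ q₁ μ₀ μ₁ σ₀ σ₁ : ℝ) : Bool × ℝ → ℝ≥0∞ := fun p =>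
  if p.1 then ENNReal.ofReal (q₀ / q₁) * ENNReal.ofReal
      (gaussianPDFReal μ₀ (σ₀ ^ 2).toNNReal p.2 / gaussianPDFReal μ₁ (σ₁ ^ 2).toNNReal p.2)
    else ENNReal.ofReal ((1 - q₀) / (1 - q₁))

lemma measurable_hurdleDensity (q₀ q₁ μ₀ μ₁ σ₀ σ₁ : ℝ) :
    Measurable (hurdleDensity q₀ q₁ μ₀ μ₁ σ₀ σ₁) := by
  refine Measurable.ite (measurable_fst (measurableSet_singleton true)) ?_ measurable_const
  exact measurable_const.mul
    ((measurable_gauss_ratio μ₀ μ₁ (σ₀ ^ 2).toNNReal (σ₁ ^ 2).toNNReal).comp measurable_snd)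

lemma hurdle_withDensity (hq₀ : q₀ ∈ Set.Ioo (0:ℝ) 1) (hq₁ : q₁ ∈ Set.Ioo (0:ℝ) 1)
    (hσ₀ : 0 < σ₀) (hσ₁ : 0 < σ₁) :
    (hurdleMeasure q₁ μ₁ (σ₁ ^ 2)).withDensity (hurdleDensity q₀ q₁ μ₀ μ₁ σ₀ σ₁)
      = hurdleMeasure q₀ μ₀ (σ₀ ^ 2) := by
  have hF := measurable_hurdleDensity q₀ q₁ μ₀ μ₁ σ₀ σ₁
  have hratio := measurable_gauss_ratio μ₀ μ₁ (σ₀ ^ 2).toNNReal (σ₁ ^ 2).toNNReal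
  rw [hurdleMeasure, hurdleMeasure, withDensity_add_measure, withDensity_smul_measure,
    withDensity_smul_measure, withDensity_dirac' hF (false, (0:ℝ)), Measure.dirac_prod,
    Measure.dirac_prod, withDensity_map' measurable_prodMk_left hF]
  have hF0 : hurdleDensity q₀ q₁ μ₀ μ₁ σ₀ σ₁ (false, (0:ℝ))
      = ENNReal.ofReal ((1 - q₀) / (1 - q₁)) := by simp [hurdleDensity]
  have hcomp : (fun x => hurdleDensity q₀ q₁ μ₀ μ₁ σ₀ σ₁ ((true, x) : Bool × ℝ))
      = (ENNReal.ofReal (q₀ / q₁) • fun x => ENNReal.ofReal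
          (gaussianPDFReal μ₀ (σ₀ ^ 2).toNNReal x / gaussianPDFReal μ₁ (σ₁ ^ 2).toNNReal x)) := by
    funext x; simp [hurdleDensity]
  rw [hF0, hcomp, withDensity_smul _ hratio, gaussian_withDensity_ratio hσ₀ hσ₁,
    Measure.map_smul, smul_smul, smul_smul,
    ← ENNReal.ofReal_mul (by have := hq₁.2; linarith : (0:ℝ) ≤ 1 - q₁),
    ← ENNReal.ofReal_mul hq₁.1.le,
    mul_div_cancel₀ _ (by have := hq₁.2; intro h; linarith : (1:ℝ) - q₁ ≠ 0),
    mul_div_cancel₀ _ hq₁.1.ne']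

lemma klDiv'_hurdle (hq₀ : q₀ ∈ Set.Ioo (0:ℝ) 1) (hq₁ : q₁ ∈ Set.Ioo (0:ℝ) 1)
    (hσ₀ : 0 < σ₀) (hσ₁ : 0 < σ₁) :
    klDiv' (hurdleMeasure q₀ μ₀ (σ₀ ^ 2)) (hurdleMeasure q₁ μ₁ (σ₁ ^ 2))
      = ENNReal.ofReal ((1 - q₀) * Real.log ((1 - q₀) / (1 - q₁))
          + q₀ * (Real.log (q₀ / q₁)
            + (Real.log (σ₁ / σ₀) + (σ₀ ^ 2 + (μ₀ - μ₁) ^ 2) / (2 * σ₁ ^ 2) - 1 / 2))) := by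
  have ha := hq₀.1; have hb := hq₀.2; have hc := hq₁.1; have hd := hq₁.2
  have hF := measurable_hurdleDensity q₀ q₁ μ₀ μ₁ σ₀ σ₁
  have hv₀ := toNNReal_sq_ne_zero hσ₀
  have hv₁ := toNNReal_sq_ne_zero hσ₁
  have hac : hurdleMeasure q₀ μ₀ (σ₀ ^ 2) ≪ hurdleMeasure q₁ μ₁ (σ₁ ^ 2) := by
    rw [← hurdle_withDensity hq₀ hq₁ hσ₀ hσ₁]; exact withDensity_absolutelyContinuous _ _
  haveI : IsFiniteMeasure (hurdleMeasure q₁ μ₁ (σ₁ ^ 2)) := by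
    rw [hurdleMeasure]
    haveI := isFiniteMeasure_ofReal_smul (1 - q₁) (Measure.dirac ((false, (0:ℝ)) : Bool × ℝ))
    haveI := isFiniteMeasure_ofReal_smul q₁
      ((Measure.dirac true).prod (gaussianReal μ₁ (σ₁ ^ 2).toNNReal))
    infer_instance
  have hrn : (hurdleMeasure q₀ μ₀ (σ₀ ^ 2)).rnDeriv (hurdleMeasure q₁ μ₁ (σ₁ ^ 2))
      =ᵐ[hurdleMeasure q₁ μ₁ (σ₁ ^ 2)] hurdleDensity q₀ q₁ μ₀ μ₁ σ₀ σ₁ := by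
    have := Measure.rnDeriv_withDensity (hurdleMeasure q₁ μ₁ (σ₁ ^ 2)) hF
    rwa [hurdle_withDensity hq₀ hq₁ hσ₀ hσ₁] at this
  have hrn' := hrn.filter_mono hac.ae_le
  rw [klDiv', if_pos hac]
  have hψ : Measurable fun p : Bool × ℝ => Real.log ((hurdleDensity q₀ q₁ μ₀ μ₁ σ₀ σ₁ p).toReal) :=
    hF.ennreal_toReal.log
  have hint : ∫ p, Real.log (((hurdleMeasure q₀ μ₀ (σ₀ ^ 2)).rnDeriv
        (hurdleMeasure q₁ μ₁ (σ₁ ^ 2)) p).toReal) ∂(hurdleMeasure q₀ μ₀ (σ₀ ^ 2))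
      = ∫ p, Real.log ((hurdleDensity q₀ q₁ μ₀ μ₁ σ₀ σ₁ p).toReal)
          ∂(hurdleMeasure q₀ μ₀ (σ₀ ^ 2)) := by
    refine integral_congr_ae ?_
    filter_upwards [hrn'] with p hp
    rw [hp]
  -- pointwise value on the `true` fiber
  have htrue : ∀ x : ℝ, Real.log ((hurdleDensity q₀ q₁ μ₀ μ₁ σ₀ σ₁ ((true, x) : Bool × ℝ)).toReal)
      = Real.log (q₀ / q₁) + (Real.log (gaussianPDFReal μ₀ (σ₀ ^ 2).toNNReal x)
          - Real.log (gaussianPDFReal μ₁ (σ₁ ^ 2).toNNReal x)) := by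
    intro x
    have hp₀ := gaussianPDFReal_pos μ₀ (σ₀ ^ 2).toNNReal x hv₀
    have hp₁ := gaussianPDFReal_pos μ₁ (σ₁ ^ 2).toNNReal x hv₁
    simp only [hurdleDensity, if_true]
    rw [ENNReal.toReal_mul, ENNReal.toReal_ofReal (div_nonneg ha.le hc.le),
      ENNReal.toReal_ofReal (div_nonneg hp₀.le hp₁.le),
      Real.log_mul (by positivity) (by positivity), Real.log_div hp₀.ne' hp₁.ne']
  have hImap : Integrable (fun p : Bool × ℝ => Real.log ((hurdleDensity q₀ q₁ μ₀ μ₁ σ₀ σ₁ p).toReal))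
      ((gaussianReal μ₀ (σ₀ ^ 2).toNNReal).map (Prod.mk true)) := by
    rw [(measurableEmbedding_prodMk_left true).integrable_map_iff]
    have hI : Integrable (fun x => Real.log (q₀ / q₁)
        + (Real.log (gaussianPDFReal μ₀ (σ₀ ^ 2).toNNReal x)
          - Real.log (gaussianPDFReal μ₁ (σ₁ ^ 2).toNNReal x)))
        (gaussianReal μ₀ (σ₀ ^ 2).toNNReal) :=
      (integrable_const _).add (integrable_log_ratio hσ₀ hσ₁)
    refine hI.congr (Filter.Eventually.of_forall fun x => ?_)
    simp only [Function.comp_apply]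
    rw [htrue x]
  rw [hint, hurdleMeasure, Measure.dirac_prod, integral_add_measure
    ((integrable_dirac'' hψ _).smul_measure ENNReal.ofReal_ne_top)
    (hImap.smul_measure ENNReal.ofReal_ne_top),
    integral_smul_measure, integral_smul_measure, integral_dirac,
    integral_map measurable_prodMk_left.aemeasurable hψ.aestronglyMeasurable]
  have hfalse : Real.log ((hurdleDensity q₀ q₁ μ₀ μ₁ σ₀ σ₁ ((false, (0:ℝ)) : Bool × ℝ)).toReal)
      = Real.log ((1 - q₀) / (1 - q₁)) := by
    simp only [hurdleDensity, Bool.false_eq_true, if_false]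
    rw [ENNReal.toReal_ofReal (div_nonneg (by linarith) (by linarith))]
  rw [hfalse, integral_congr_ae (Filter.Eventually.of_forall htrue),
    integral_add (integrable_const _) (integrable_log_ratio hσ₀ hσ₁),
    integral_log_ratio hσ₀ hσ₁, integral_const]
  simp only [measure_univ, probReal_univ, ENNReal.toReal_one, one_smul, smul_eq_mul, one_mul,
    ENNReal.toReal_ofReal (by linarith : (0:ℝ) ≤ 1 - q₀), ENNReal.toReal_ofReal ha.le]
end hurdle
lemma bern_expr_nonneg {q₀ q₁ : ℝ} (hq₀ : q₀ ∈ Set.Ioo (0:ℝ) 1) (hq₁ : q₁ ∈ Set.Ioo (0:ℝ) 1) :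
    0 ≤ (1 - q₀) * Real.log ((1 - q₀) / (1 - q₁)) + q₀ * Real.log (q₀ / q₁) := by
  have ha := hq₀.1; have hb := hq₀.2; have hc := hq₁.1; have hd := hq₁.2
  have l1 : Real.log ((1 - q₁) / (1 - q₀)) ≤ (1 - q₁) / (1 - q₀) - 1 :=
    Real.log_le_sub_one_of_pos (by have : (0:ℝ) < 1 - q₁ := by linarith
                                   have : (0:ℝ) < 1 - q₀ := by linarith
                                   positivity)
  have l2 : Real.log (q₁ / q₀) ≤ q₁ / q₀ - 1 := Real.log_le_sub_one_of_pos (by positivity)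
  have e1 : Real.log ((1 - q₀) / (1 - q₁)) = - Real.log ((1 - q₁) / (1 - q₀)) := by
    rw [← Real.log_inv, inv_div]
  have e2 : Real.log (q₀ / q₁) = - Real.log (q₁ / q₀) := by
    rw [← Real.log_inv, inv_div]
  have m1 : (1 - q₀) * Real.log ((1 - q₁) / (1 - q₀)) ≤ q₀ - q₁ := by
    have h := mul_le_mul_of_nonneg_left l1 (by linarith : (0:ℝ) ≤ 1 - q₀)
    have h0 : (1:ℝ) - q₀ ≠ 0 := by linarith
    have : (1 - q₀) * ((1 - q₁) / (1 - q₀) - 1) = q₀ - q₁ := by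
      field_simp
      ring
    linarith
  have m2 : q₀ * Real.log (q₁ / q₀) ≤ q₁ - q₀ := by
    have h := mul_le_mul_of_nonneg_left l2 ha.le
    have h0 : q₀ ≠ 0 := ha.ne'
    have : q₀ * (q₁ / q₀ - 1) = q₁ - q₀ := by
      field_simp
    linarith
  rw [e1, e2]
  simp only [mul_neg]
  linarith

lemma gauss_expr_nonneg {μ₀ μ₁ σ₀ σ₁ : ℝ} (hσ₀ : 0 < σ₀) (hσ₁ : 0 < σ₁) :
    0 ≤ Real.log (σ₁ / σ₀) + (σ₀ ^ 2 + (μ₀ - μ₁) ^ 2) / (2 * σ₁ ^ 2) - 1 / 2 := by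
  have l : Real.log (σ₀ / σ₁) ≤ σ₀ / σ₁ - 1 := Real.log_le_sub_one_of_pos (by positivity)
  have e : Real.log (σ₁ / σ₀) = - Real.log (σ₀ / σ₁) := by rw [← Real.log_inv, inv_div]
  have hsplit : (σ₀ ^ 2 + (μ₀ - μ₁) ^ 2) / (2 * σ₁ ^ 2)
      = (σ₀ / σ₁) ^ 2 / 2 + (μ₀ - μ₁) ^ 2 / (2 * σ₁ ^ 2) := by
    field_simp
  have hD : 0 ≤ (μ₀ - μ₁) ^ 2 / (2 * σ₁ ^ 2) := by positivity
  rw [e, hsplit]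
  nlinarith [l, sq_nonneg (σ₀ / σ₁ - 1)]


/-- Kullback–Leibler decomposition for hurdle distributions:
`KL(H(π₀,μ₀,σ₀²), H(π₁,μ₁,σ₁²))
  = KL(Bernoulli(π₀), Bernoulli(π₁)) + π₀ · KL(N(μ₀,σ₀²), N(μ₁,σ₁²))
  = π₀ log(π₀/π₁) + (1−π₀) log((1−π₀)/(1−π₁))
      + π₀·[log(σ₁/σ₀) + (σ₀² + (μ₀−μ₁)²)/(2σ₁²) − 1/2]`. -/
theorem hurdle_kl_decomposition
    (π₀ π₁ : ℝ) (hπ₀ : π₀ ∈ Set.Ioo (0 : ℝ) 1) (hπ₁ : π₁ ∈ Set.Ioo (0 : ℝ) 1)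
    (μ₀ μ₁ : ℝ) (σ₀ σ₁ : ℝ) (hσ₀ : 0 < σ₀) (hσ₁ : 0 < σ₁) :
    klDiv' (hurdleMeasure π₀ μ₀ (σ₀ ^ 2)) (hurdleMeasure π₁ μ₁ (σ₁ ^ 2)) =
        klDiv' (bernoulliMeasure π₀) (bernoulliMeasure π₁) +
          ENNReal.ofReal π₀ *
            klDiv' (gaussianReal μ₀ (σ₀ ^ 2).toNNReal) (gaussianReal μ₁ (σ₁ ^ 2).toNNReal) ∧
    klDiv' (hurdleMeasure π₀ μ₀ (σ₀ ^ 2)) (hurdleMeasure π₁ μ₁ (σ₁ ^ 2)) =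
        ENNReal.ofReal
          (π₀ * Real.log (π₀ / π₁) + (1 - π₀) * Real.log ((1 - π₀) / (1 - π₁)) +
            π₀ * (Real.log (σ₁ / σ₀) + (σ₀ ^ 2 + (μ₀ - μ₁) ^ 2) / (2 * σ₁ ^ 2) - 1 / 2)) := by
  constructor
  · rw [klDiv'_hurdle hπ₀ hπ₁ hσ₀ hσ₁, klDiv'_bernoulli hπ₀ hπ₁, klDiv'_gaussian hσ₀ hσ₁,
      ← ENNReal.ofReal_mul hπ₀.1.le,
      ← ENNReal.ofReal_add (bern_expr_nonneg hπ₀ hπ₁)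
        (mul_nonneg hπ₀.1.le (gauss_expr_nonneg hσ₀ hσ₁))]
    congr 1
    ring
  · rw [klDiv'_hurdle hπ₀ hπ₁ hσ₀ hσ₁]
    congr 1
    ring
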